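/- Let K be ℚ(i) or ℚ(√−3) and let w ∈ F be such that α := w⁴ lies in K. Then α or −α is a square in K. Moreover, if K = ℚ(i), then α is a square in K. (That is: if the square root of an element α of K is a square in F, then ±α is a square in K, and α itself is a square in K when K = ℚ(i).) -/

import Mathlib

open IntermediateField

/-- `ℚ(i)`, realized as a subfield of `ℂ`. -/
noncomputable def QI : IntermediateField ℚ ℂ := ℚ⟮(Complex.I : ℂ)⟯

/-- `ℚ(√−3)`, realized as a subfield of `ℂ`. -/
noncomputable def Qm3 : IntermediateField ℚ ℂ := ℚ⟮(Complex.I * Real.sqrt 3 : ℂ)⟯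

/-- The maximal elementary abelian 2-extension of `K` inside an algebraic closure, i.e.
the subfield generated over `K` by the square roots of all elements of `K`. -/
noncomputable def F (K : IntermediateField ℚ ℂ) : IntermediateField K ℂ :=
  IntermediateField.adjoin K {x : ℂ | ∃ a : K, x ^ 2 = (a : ℂ)}

/-- The set `{x + y*r : x, y ∈ L}` as a subfield of `ℂ`, when `r ^ 2 ∈ L`. -/
noncomputable def quadExt (L : Subfield ℂ) (r : ℂ) (hr : r ^ 2 ∈ L) : Subfield ℂ where
  carrier := {z | ∃ x ∈ L, ∃ y ∈ L, z = x + y * r}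
  zero_mem' := ⟨0, zero_mem L, 0, zero_mem L, by ring⟩
  one_mem' := ⟨1, one_mem L, 0, zero_mem L, by ring⟩
  add_mem' := by
    rintro _ _ ⟨x, hx, y, hy, rfl⟩ ⟨x', hx', y', hy', rfl⟩
    exact ⟨x + x', add_mem hx hx', y + y', add_mem hy hy', by ring⟩
  neg_mem' := by
    rintro _ ⟨x, hx, y, hy, rfl⟩
    exact ⟨-x, neg_mem hx, -y, neg_mem hy, by ring⟩
  mul_mem' := by
    rintro _ _ ⟨x, hx, y, hy, rfl⟩ ⟨x', hx', y', hy', rfl⟩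
    refine ⟨x * x' + y * y' * r ^ 2, by exact add_mem (mul_mem hx hx') (mul_mem (mul_mem hy hy') hr),
      x * y' + x' * y, by exact add_mem (mul_mem hx hy') (mul_mem hx' hy), by ring⟩
  inv_mem' := by
    rintro _ ⟨x, hx, y, hy, rfl⟩
    by_cases hz : x + y * r = 0
    · exact ⟨0, zero_mem L, 0, zero_mem L, by rw [hz]; simp⟩
    by_cases hd : x ^ 2 - y ^ 2 * r ^ 2 = 0
    · have hxy : x - y * r = 0 := by
        rcases mul_eq_zero.1 (show (x + y * r) * (x - y * r) = 0 by rw [← hd]; ring) with h | h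
        · exact absurd h hz
        · exact h
      have hr0 : r ≠ 0 := by
        rintro rfl
        apply hz
        have : x = 0 := by have := hxy; simpa using this
        simp [this]
      have hy0 : y ≠ 0 := by
        rintro rfl
        apply hz
        have : x = 0 := by simpa using hxy
        simp [this]
      refine ⟨0, zero_mem L, (2 * y * r ^ 2)⁻¹, inv_mem (mul_mem (mul_mem (by
        exact_mod_cast natCast_mem L 2 : (2:ℂ) ∈ L) hy) hr), ?_⟩
      have hx' : x = y * r := by linear_combination hxy
      rw [hx']
      field_simp
      ring
    · refine ⟨x * (x ^ 2 - y ^ 2 * r ^ 2)⁻¹, mul_mem hx (inv_mem (by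
        exact sub_mem (pow_mem hx 2) (mul_mem (pow_mem hy 2) hr))),
        -(y * (x ^ 2 - y ^ 2 * r ^ 2)⁻¹), neg_mem (mul_mem hy (inv_mem (by
        exact sub_mem (pow_mem hx 2) (mul_mem (pow_mem hy 2) hr)))), ?_⟩
      refine inv_eq_of_mul_eq_one_right ?_
      field_simp
      ring

theorem le_quadExt (L : Subfield ℂ) (r : ℂ) (hr : r ^ 2 ∈ L) : L ≤ quadExt L r hr :=
  fun z hz => ⟨z, hz, 0, zero_mem L, by ring⟩

theorem mem_quadExt_self (L : Subfield ℂ) (r : ℂ) (hr : r ^ 2 ∈ L) : r ∈ quadExt L r hr :=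
  ⟨0, zero_mem L, 1, one_mem L, by ring⟩

/-- Key induction: in a tower of quadratic extensions of `M` (with `i ∈ M`) generated by
square roots of elements of `M`, every fourth power landing in `M` has its square in `M`. -/
theorem quad_tower (M : Subfield ℂ) (hI : Complex.I ∈ M) (t : Finset ℂ) :
    (∀ x ∈ t, x ^ 2 ∈ M) → ∀ z ∈ Subfield.closure (↑M ∪ (t : Set ℂ)), z ^ 4 ∈ M → z ^ 2 ∈ M := by
  classical
  induction t using Finset.induction_on with
  | empty =>
    intro _ z hz hz4
    rw [Finset.coe_empty, Set.union_empty, Subfield.closure_eq] at hz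
    exact pow_mem hz 2
  | @insert r t' hrt ih =>
    intro ht z hz hz4
    set L := Subfield.closure (↑M ∪ (t' : Set ℂ)) with hLdef
    have hML : M ≤ L := fun c hc => Subfield.subset_closure (Or.inl hc)
    have ih' : ∀ z ∈ L, z ^ 4 ∈ M → z ^ 2 ∈ M :=
      fun z hz => ih (fun x hx => ht x (Finset.mem_insert_of_mem hx)) z hz
    have hr2M : r ^ 2 ∈ M := ht r (Finset.mem_insert_self r t')
    have hr2 : r ^ 2 ∈ L := hML hr2M
    by_cases hrL : r ∈ L
    · have hle : Subfield.closure (↑M ∪ ((insert r t' : Finset ℂ) : Set ℂ)) ≤ L := by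
        rw [Subfield.closure_le]
        rintro x (hx | hx)
        · exact hML hx
        · rw [Finset.coe_insert] at hx
          rcases hx with hx | hx
          · rw [hx]; exact hrL
          · exact Subfield.subset_closure (Or.inr hx)
      exact ih' z (hle hz) hz4
    · have hle : Subfield.closure (↑M ∪ ((insert r t' : Finset ℂ) : Set ℂ)) ≤ quadExt L r hr2 := by
        rw [Subfield.closure_le]
        rintro x (hx | hx)
        · exact le_quadExt L r hr2 (hML hx)
        · rw [Finset.coe_insert] at hx
          rcases hx with hx | hx
          · rw [hx]; exact mem_quadExt_self L r hr2
          · exact le_quadExt L r hr2 (Subfield.subset_closure (Or.inr hx))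
      obtain ⟨x, hx, y, hy, rfl⟩ := hle hz
      have unique : ∀ c d : ℂ, c ∈ L → d ∈ L → c + d * r ∈ L → d = 0 := by
        intro c d hc hd hcd
        by_contra hd0
        refine hrL ?_
        have hrr : r = d⁻¹ * ((c + d * r) - c) := by field_simp; ring
        rw [hrr]
        exact mul_mem (inv_mem hd) (sub_mem hcd hc)
      by_cases hy0 : y = 0
      · subst hy0
        simp only [zero_mul, add_zero] at hz4 ⊢
        exact ih' x hx hz4
      by_cases hx0 : x = 0
      · subst hx0
        simp only [zero_add] at hz4 ⊢
        have hrne : r ≠ 0 := fun h => hrL (h ▸ zero_mem L)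
        have hr2ne : r ^ 2 ≠ 0 := pow_ne_zero 2 hrne
        have hy4 : y ^ 4 ∈ M := by
          have h1 : y ^ 4 = (y * r) ^ 4 * ((r ^ 2) ^ 2)⁻¹ := by
            field_simp
          rw [h1]
          exact mul_mem hz4 (inv_mem (pow_mem hr2M 2))
        have hy2 : y ^ 2 ∈ M := ih' y hy hy4
        rw [mul_pow]
        exact mul_mem hy2 hr2M
      · exfalso
        have hz4L : (x + y * r) ^ 4 ∈ L := hML hz4
        have huL : x ^ 2 + y ^ 2 * r ^ 2 ∈ L := add_mem (pow_mem hx 2) (mul_mem (pow_mem hy 2) hr2)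
        have h2L : (2 : ℂ) ∈ L := by exact_mod_cast natCast_mem L 2
        have hvL : 2 * x * y ∈ L := mul_mem (mul_mem h2L hx) hy
        have hbase : (x ^ 2 + y ^ 2 * r ^ 2) ^ 2 + (2 * x * y) ^ 2 * r ^ 2 ∈ L :=
          add_mem (pow_mem huL 2) (mul_mem (pow_mem hvL 2) hr2)
        have hcore : ((x ^ 2 + y ^ 2 * r ^ 2) ^ 2 + (2 * x * y) ^ 2 * r ^ 2)
            + (2 * (x ^ 2 + y ^ 2 * r ^ 2) * (2 * x * y)) * r ∈ L := by
          have hid : ((x ^ 2 + y ^ 2 * r ^ 2) ^ 2 + (2 * x * y) ^ 2 * r ^ 2)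
              + (2 * (x ^ 2 + y ^ 2 * r ^ 2) * (2 * x * y)) * r = (x + y * r) ^ 4 := by ring
          rw [hid]
          exact hz4L
        have h2uv : 2 * (x ^ 2 + y ^ 2 * r ^ 2) * (2 * x * y) = 0 :=
          unique _ _ hbase (mul_mem (mul_mem h2L huL) hvL) hcore
        have hu0 : x ^ 2 + y ^ 2 * r ^ 2 = 0 := by
          rcases mul_eq_zero.1 h2uv with h | h
          · rcases mul_eq_zero.1 h with h | h
            · norm_num at h
            · exact h
          · rcases mul_eq_zero.1 h with h | h
            · rcases mul_eq_zero.1 h with h | h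
              · norm_num at h
              · exact absurd h hx0
            · exact absurd h hy0
        set s : ℂ := Complex.I * x * y⁻¹ with hs
        have hsL : s ∈ L := mul_mem (mul_mem (hML hI) hx) (inv_mem hy)
        have hsq : s ^ 2 = r ^ 2 := by
          have hyne : y ^ 2 ≠ 0 := pow_ne_zero 2 hy0
          refine mul_right_cancel₀ hyne ?_
          have hinv : y⁻¹ * y = 1 := inv_mul_cancel₀ hy0
          calc s ^ 2 * y ^ 2 = Complex.I ^ 2 * x ^ 2 * (y⁻¹ * y) ^ 2 := by rw [hs]; ring
            _ = -x ^ 2 := by rw [hinv, Complex.I_sq]; ring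
            _ = r ^ 2 * y ^ 2 := by linear_combination -hu0
        have : (r - s) * (r + s) = 0 := by linear_combination - hsq
        rcases mul_eq_zero.1 this with h | h
        · exact hrL (by rw [show r = s by linear_combination h]; exact hsL)
        · exact hrL (by rw [show r = -s by linear_combination h]; exact neg_mem hsL)

/-- Elements of `F K` lie in the subfield generated by `K` and finitely many square roots. -/
theorem exists_finset_F (K : IntermediateField ℚ ℂ) (w : ℂ) (hw : w ∈ F K) :
    ∃ t : Finset ℂ, (∀ x ∈ t, ∃ a : K, x ^ 2 = (a : ℂ)) ∧
      w ∈ Subfield.closure (Set.range (algebraMap K ℂ) ∪ (t : Set ℂ)) := by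
  classical
  have hw' : w ∈ Subfield.closure
      (Set.range (algebraMap K ℂ) ∪ {x : ℂ | ∃ a : K, x ^ 2 = (a : ℂ)}) := hw
  refine Subfield.closure_induction (p := fun z _ => ∃ t : Finset ℂ,
      (∀ x ∈ t, ∃ a : K, x ^ 2 = (a : ℂ)) ∧
      z ∈ Subfield.closure (Set.range (algebraMap K ℂ) ∪ (t : Set ℂ))) ?_ ?_ ?_ ?_ ?_ ?_ hw'
  · rintro x (hx | hx)
    · exact ⟨∅, by simp, Subfield.subset_closure (Or.inl hx)⟩
    · exact ⟨{x}, by simpa using hx, Subfield.subset_closure (Or.inr (by simp))⟩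
  · exact ⟨∅, by simp, one_mem _⟩
  · rintro a b _ _ ⟨t₁, ht₁, ha⟩ ⟨t₂, ht₂, hb⟩
    refine ⟨t₁ ∪ t₂, ?_, ?_⟩
    · intro x hx
      rcases Finset.mem_union.1 hx with h | h
      · exact ht₁ x h
      · exact ht₂ x h
    · have m1 : Subfield.closure (Set.range (algebraMap K ℂ) ∪ (t₁ : Set ℂ)) ≤
          Subfield.closure (Set.range (algebraMap K ℂ) ∪ ((t₁ ∪ t₂ : Finset ℂ) : Set ℂ)) :=
        Subfield.closure_mono (Set.union_subset_union_right _ (by intro u hu; simp only [Finset.coe_union, Set.mem_union]; simp only [Finset.mem_coe] at hu ⊢; tauto))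
      have m2 : Subfield.closure (Set.range (algebraMap K ℂ) ∪ (t₂ : Set ℂ)) ≤
          Subfield.closure (Set.range (algebraMap K ℂ) ∪ ((t₁ ∪ t₂ : Finset ℂ) : Set ℂ)) :=
        Subfield.closure_mono (Set.union_subset_union_right _ (by intro u hu; simp only [Finset.coe_union, Set.mem_union]; simp only [Finset.mem_coe] at hu ⊢; tauto))
      exact add_mem (m1 ha) (m2 hb)
  · rintro a _ ⟨t, ht, ha⟩
    exact ⟨t, ht, neg_mem ha⟩
  · rintro a _ ⟨t, ht, ha⟩
    exact ⟨t, ht, inv_mem ha⟩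
  · rintro a b _ _ ⟨t₁, ht₁, ha⟩ ⟨t₂, ht₂, hb⟩
    refine ⟨t₁ ∪ t₂, ?_, ?_⟩
    · intro x hx
      rcases Finset.mem_union.1 hx with h | h
      · exact ht₁ x h
      · exact ht₂ x h
    · have m1 : Subfield.closure (Set.range (algebraMap K ℂ) ∪ (t₁ : Set ℂ)) ≤
          Subfield.closure (Set.range (algebraMap K ℂ) ∪ ((t₁ ∪ t₂ : Finset ℂ) : Set ℂ)) :=
        Subfield.closure_mono (Set.union_subset_union_right _ (by intro u hu; simp only [Finset.coe_union, Set.mem_union]; simp only [Finset.mem_coe] at hu ⊢; tauto))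
      have m2 : Subfield.closure (Set.range (algebraMap K ℂ) ∪ (t₂ : Set ℂ)) ≤
          Subfield.closure (Set.range (algebraMap K ℂ) ∪ ((t₁ ∪ t₂ : Finset ℂ) : Set ℂ)) :=
        Subfield.closure_mono (Set.union_subset_union_right _ (by intro u hu; simp only [Finset.coe_union, Set.mem_union]; simp only [Finset.mem_coe] at hu ⊢; tauto))
      exact mul_mem (m1 ha) (m2 hb)

theorem neg_one_mem_toSubfield (K : IntermediateField ℚ ℂ) : (Complex.I) ^ 2 ∈ K.toSubfield := by
  rw [Complex.I_sq]
  exact neg_mem (one_mem _)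

/-- Main step: if `w ∈ F K` and `w ^ 4 ∈ K` then `w ^ 2 = x + y * I` with `x, y ∈ K`. -/
theorem step (K : IntermediateField ℚ ℂ) (α : K) (w : F K)
    (hw : w ^ 4 = algebraMap K (F K) α) :
    ∃ x y : ℂ, x ∈ K ∧ y ∈ K ∧ ((w : ℂ)) ^ 2 = x + y * Complex.I := by
  obtain ⟨t, ht, hmem⟩ := exists_finset_F K (w : ℂ) w.2
  set M := quadExt K.toSubfield Complex.I (neg_one_mem_toSubfield K) with hM
  have hIM : Complex.I ∈ M := mem_quadExt_self _ _ _
  have hKM : K.toSubfield ≤ M := le_quadExt _ _ _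
  have ht' : ∀ x ∈ t, x ^ 2 ∈ M := by
    intro x hx
    obtain ⟨a, ha⟩ := ht x hx
    rw [ha]
    exact hKM a.2
  have hcl : Subfield.closure (Set.range (algebraMap K ℂ) ∪ (t : Set ℂ)) ≤
      Subfield.closure (↑M ∪ (t : Set ℂ)) := by
    apply Subfield.closure_mono
    apply Set.union_subset_union_left
    rintro _ ⟨a, rfl⟩
    exact hKM a.2
  have hw4 : (w : ℂ) ^ 4 ∈ M := by
    have hc : ((w : ℂ)) ^ 4 = (α : ℂ) := by
      have := congrArg (fun z : F K => (z : ℂ)) hw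
      push_cast at this
      exact this
    rw [hc]
    exact hKM α.2
  have h2 := quad_tower M hIM t ht' (w : ℂ) (hcl hmem) hw4
  obtain ⟨x, hx, y, hy, h⟩ := h2
  exact ⟨x, y, hx, hy, h⟩

theorem I_not_mem_Qm3 : Complex.I ∉ Qm3 := by
  intro hI
  set θ : ℂ := Complex.I * Real.sqrt 3 with hθ
  have hθ2 : θ ^ 2 ∈ (algebraMap ℚ ℂ).fieldRange := by
    refine ⟨-3, ?_⟩
    rw [hθ]
    have h3 : ((Real.sqrt 3 : ℝ) : ℂ) ^ 2 = 3 := by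
      rw [← Complex.ofReal_pow, Real.sq_sqrt (by norm_num : (3:ℝ) ≥ 0)]
      norm_num
    push_cast
    rw [mul_pow, Complex.I_sq, h3]
    norm_num
  have hle : Qm3.toSubfield ≤ quadExt (algebraMap ℚ ℂ).fieldRange θ hθ2 := by
    have h1 : Qm3.toSubfield = Subfield.closure (Set.range (algebraMap ℚ ℂ) ∪ {θ}) := rfl
    rw [h1, Subfield.closure_le]
    rintro x (hx | hx)
    · obtain ⟨a, rfl⟩ := hx
      exact le_quadExt _ _ _ ⟨a, rfl⟩
    · rw [Set.mem_singleton_iff] at hx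
      rw [hx]
      exact mem_quadExt_self _ _ _
  obtain ⟨x, hx, y, hy, heq⟩ := hle hI
  obtain ⟨p, rfl⟩ := hx
  obtain ⟨q, rfl⟩ := hy
  rw [eq_ratCast (algebraMap ℚ ℂ) p, eq_ratCast (algebraMap ℚ ℂ) q] at heq
  have him := congrArg Complex.im heq
  simp [hθ, Complex.ext_iff] at him
  -- him should give 1 = q * √3 (as reals)
  have hirr : Irrational (Real.sqrt 3) := by
    have := Nat.prime_three.irrational_sqrt
    simpa using this
  have hq0 : (q : ℝ) ≠ 0 := by
    intro h
    rw [h] at him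
    norm_num at him
  refine hirr ⟨q⁻¹, ?_⟩
  push_cast
  field_simp
  linarith [him]

theorem sqrt_is_square_in_F :
    (∀ (K : IntermediateField ℚ ℂ), K = QI ∨ K = Qm3 →
      ∀ (α : K) (w : F K), w ^ 4 = algebraMap K (F K) α →
        (∃ b : K, α = b ^ 2) ∨ (∃ b : K, -α = b ^ 2)) ∧
    (∀ (α : QI) (w : F QI), w ^ 4 = algebraMap QI (F QI) α → ∃ b : QI, α = b ^ 2) := by
  have coe4 : ∀ (K : IntermediateField ℚ ℂ) (α : K) (w : F K),
      w ^ 4 = algebraMap K (F K) α → ((w : ℂ)) ^ 4 = (α : ℂ) := by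
    intro K α w hw
    have := congrArg (fun z : F K => (z : ℂ)) hw
    push_cast at this
    exact this
  have expand : ∀ x y : ℂ, (x + y * Complex.I) ^ 2 = (x ^ 2 - y ^ 2) + (2 * x * y) * Complex.I := by
    intro x y
    linear_combination y ^ 2 * Complex.I_sq
  have partQI : ∀ (α : QI) (w : F QI), w ^ 4 = algebraMap QI (F QI) α → ∃ b : QI, α = b ^ 2 := by
    intro α w hw
    obtain ⟨x, y, hx, hy, h2⟩ := step QI α w hw
    have hI : Complex.I ∈ QI := IntermediateField.mem_adjoin_simple_self ℚ Complex.I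
    refine ⟨⟨x + y * Complex.I, add_mem hx (mul_mem hy hI)⟩, ?_⟩
    have hα : (α : ℂ) = (x + y * Complex.I) ^ 2 := by
      rw [← coe4 QI α w hw, show (4 : ℕ) = 2 * 2 from rfl, pow_mul, h2]
    exact Subtype.ext (by push_cast; exact hα)
  refine ⟨?_, partQI⟩
  intro K hK α w hw
  rcases hK with rfl | rfl
  · exact Or.inl (partQI α w hw)
  · obtain ⟨x, y, hx, hy, h2⟩ := step Qm3 α w hw
    have hα : (α : ℂ) = (x + y * Complex.I) ^ 2 := by
      rw [← coe4 Qm3 α w hw, show (4 : ℕ) = 2 * 2 from rfl, pow_mul, h2]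
    have hxy : x * y = 0 := by
      by_contra h
      apply I_not_mem_Qm3
      have h2m : (2 : ℂ) ∈ Qm3 := by exact_mod_cast _root_.natCast_mem Qm3 2
      have hIeq : Complex.I = (2 * x * y)⁻¹ * ((α : ℂ) - (x ^ 2 - y ^ 2)) := by
        rw [hα, expand]
        have h2xy : (2 : ℂ) * x * y ≠ 0 := by
          intro hc
          rcases mul_eq_zero.1 hc with hc | hc
          · rcases mul_eq_zero.1 hc with hc | hc
            · norm_num at hc
            · exact h (by rw [hc]; ring)
          · exact h (by rw [hc]; ring)
        field_simp
        rw [eq_div_iff h]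
        ring
      rw [hIeq]
      exact mul_mem (inv_mem (mul_mem (mul_mem h2m hx) hy))
        (sub_mem α.2 (sub_mem (pow_mem hx 2) (pow_mem hy 2)))
    rcases mul_eq_zero.1 hxy with hx0 | hy0
    · refine Or.inr ⟨⟨y, hy⟩, ?_⟩
      refine Subtype.ext ?_
      push_cast
      rw [hα, hx0, expand]
      ring
    · refine Or.inl ⟨⟨x, hx⟩, ?_⟩
      refine Subtype.ext ?_
      push_cast
      rw [hα, hy0, expand]
      ring
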